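/- For saturated simplicial models, bisimilarity coincides with logical equivalence: if C and D are saturated simplicial models, F a facet of C and G a facet of D, then C,F and D,G are bisimilar if and only if they satisfy exactly the same sentences of L. -/

import Mathlib

namespace SimplicialEpistemic

/-! ## Syntax -/

inductive Formula (Ag Xv Pr : Type) : Type
  | atom : Pr → Xv → Formula Ag Xv Pr
  | top : Formula Ag Xv Pr
  | neg : Formula Ag Xv Pr → Formula Ag Xv Pr
  | and : Formula Ag Xv Pr → Formula Ag Xv Pr → Formula Ag Xv Pr
  | assign : Xv → Ag → Formula Ag Xv Pr → Formula Ag Xv Pr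
  | know : Finset Xv → Formula Ag Xv Pr → Formula Ag Xv Pr

namespace Formula

variable {Ag Xv Pr : Type} [DecidableEq Xv]

/-- Free variables of a formula. -/
def FV : Formula Ag Xv Pr → Finset Xv
  | .atom _ x => {x}
  | .top => ∅
  | .neg φ => FV φ
  | .and φ ψ => FV φ ∪ FV ψ
  | .assign x _ φ => FV φ \ {x}
  | .know Xs _ => Xs

/-- Well-formedness: in `K_X α`, the formula `α` must have no free variables.
The language `L` consists of the well-formed formulas. -/
def Wf : Formula Ag Xv Pr → Prop
  | .atom _ _ => True
  | .top => True
  | .neg φ => Wf φ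
  | .and φ ψ => Wf φ ∧ Wf ψ
  | .assign _ _ φ => Wf φ
  | .know _ α => Wf α ∧ FV α = ∅

/-- A sentence is a well-formed formula with no free variables. -/
def Sent (φ : Formula Ag Xv Pr) : Prop := Wf φ ∧ FV φ = ∅

/-- Implication `φ → ψ`, defined as `¬(φ ∧ ¬ψ)`. -/
def impl (φ ψ : Formula Ag Xv Pr) : Formula Ag Xv Pr := .neg (.and φ (.neg ψ))

/-- Biconditional `φ ↔ ψ`. -/
def fiff (φ ψ : Formula Ag Xv Pr) : Formula Ag Xv Pr := .and (impl φ ψ) (impl ψ φ)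

/-- Disjunction `φ ∨ ψ`, defined as `¬(¬φ ∧ ¬ψ)`. -/
def fdisj (φ ψ : Formula Ag Xv Pr) : Formula Ag Xv Pr := .neg (.and (.neg φ) (.neg ψ))

/-- Falsum `⊥ := ¬⊤`. -/
def fbot : Formula Ag Xv Pr := .neg .top

/-- The dual assignment operator `⟨x:=a⟩φ := ¬[x:=a]¬φ`. -/
def dia (x : Xv) (a : Ag) (φ : Formula Ag Xv Pr) : Formula Ag Xv Pr :=
  .neg (.assign x a (.neg φ))

/-- Finite conjunction of a list of formulas. -/
def bigAnd : List (Formula Ag Xv Pr) → Formula Ag Xv Pr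
  | [] => .top
  | φ :: l => .and φ (bigAnd l)

/-- Iterated assignment `[x⃗:=a⃗]φ`. -/
def assigns : List Xv → List Ag → Formula Ag Xv Pr → Formula Ag Xv Pr
  | x :: xs, a :: as, φ => .assign x a (assigns xs as φ)
  | _, _, φ => φ

/-- Substitution `φ[y/x]` of `y` for all free occurrences of `x` in `φ`. -/
def subst (x y : Xv) : Formula Ag Xv Pr → Formula Ag Xv Pr
  | .atom p z => .atom p (if z = x then y else z)
  | .top => .top
  | .neg φ => .neg (subst x y φ)
  | .and φ ψ => .and (subst x y φ) (subst x y ψ)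
  | .assign z a φ => if z = x then .assign z a φ else .assign z a (subst x y φ)
  | .know Xs α => .know (Xs.image fun z => if z = x then y else z) α

/-- Admissibility of `φ[y/x]`: `x` has no free occurrence in `φ` within the scope
of `[y:=b]` for any `b`. -/
def Adm (x y : Xv) : Formula Ag Xv Pr → Prop
  | .atom _ _ => True
  | .top => True
  | .neg φ => Adm x y φ
  | .and φ ψ => Adm x y φ ∧ Adm x y ψ
  | .assign z _ φ => z = x ∨ x ∉ FV φ ∨ (z ≠ y ∧ Adm x y φ)
  | .know _ _ => True

/-- `occurs y φ`: the variable `y` occurs (free or bound) in `φ`. -/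
def occurs (y : Xv) : Formula Ag Xv Pr → Prop
  | .atom _ z => z = y
  | .top => False
  | .neg φ => occurs y φ
  | .and φ ψ => occurs y φ ∨ occurs y ψ
  | .assign z _ φ => z = y ∨ occurs y φ
  | .know Xs α => y ∈ Xs ∨ occurs y α

/-- Propositional evaluation, treating atoms, assignment formulas and knowledge
formulas as propositional atoms. -/
def propEval (v : Formula Ag Xv Pr → Bool) : Formula Ag Xv Pr → Bool
  | .atom p x => v (.atom p x)
  | .top => true
  | .neg φ => !(propEval v φ)
  | .and φ ψ => propEval v φ && propEval v ψ
  | .assign x a φ => v (.assign x a φ)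
  | .know Xs α => v (.know Xs α)

/-- `φ` is a propositional tautology. -/
def Tautology (φ : Formula Ag Xv Pr) : Prop := ∀ v, propEval v φ = true

end Formula

/-! ## Simplicial models and their semantics -/

structure SimpModel (Ag Pr : Type) : Type 1 where
  V : Type
  faces : Set (Set V)
  χ : V → Ag
  ℓ : Pr → Set V

namespace SimpModel

variable {Ag Pr : Type}

/-- The facets: faces contained in no other face. -/
def facets (C : SimpModel Ag Pr) : Set (Set C.V) :=
  {F | F ∈ C.faces ∧ ∀ G ∈ C.faces, F ⊆ G → F = G}

/-- The conditions for being a genuine simplicial model. -/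
def IsModel (C : SimpModel Ag Pr) : Prop :=
  Nonempty C.V ∧ (∅ : Set C.V) ∉ C.faces ∧
    (∀ Y F : Set C.V, Y.Nonempty → Y ⊆ F → F ∈ C.faces → Y ∈ C.faces) ∧
    (∀ v : C.V, {v} ∈ C.faces) ∧
    (∀ F ∈ C.faces, Set.InjOn C.χ F)

end SimpModel

/-! ## First-order Kripke models and their semantics -/

structure KModel (Ag Pr : Type) : Type 1 where
  W : Type
  δ : W → Set Ag
  R : Ag → W → W → Prop
  ρ : Pr → W → Set Ag

namespace KModel

variable {Ag Pr : Type}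

/-- The conditions for being a genuine first-order Kripke model. -/
def IsModel (M : KModel Ag Pr) : Prop :=
  Nonempty M.W ∧ (∀ w : M.W, (M.δ w).Nonempty) ∧
    (∀ (a : Ag) (w v : M.W), M.R a w v → a ∈ M.δ w) ∧
    (∀ (p : Pr) (w : M.W), M.ρ p w ⊆ M.δ w)

end KModel

variable {Ag Xv Pr : Type}

/-- Simplicial satisfaction `C, F, σ ⊩ φ`. -/
def SSat [DecidableEq Xv] (C : SimpModel Ag Pr) :
    Formula Ag Xv Pr → Set C.V → (Xv → Ag) → Prop
  | .atom p x, F, σ => σ x ∈ C.χ '' (F ∩ C.ℓ p)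
  | .top, _, _ => True
  | .neg φ, F, σ => ¬ SSat C φ F σ
  | .and φ ψ, F, σ => SSat C φ F σ ∧ SSat C ψ F σ
  | .assign x a φ, F, σ => a ∈ C.χ '' F → SSat C φ F (Function.update σ x a)
  | .know Xs α, F, σ =>
      ∀ G ∈ C.facets, (∀ x ∈ Xs, σ x ∈ C.χ '' (F ∩ G)) → SSat C α G σ

/-- Kripke satisfaction `M, w, σ ⊨ φ`. -/
def KSat [DecidableEq Xv] (M : KModel Ag Pr) :
    Formula Ag Xv Pr → M.W → (Xv → Ag) → Prop
  | .atom p x, w, σ => σ x ∈ M.ρ p w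
  | .top, _, _ => True
  | .neg φ, w, σ => ¬ KSat M φ w σ
  | .and φ ψ, w, σ => KSat M φ w σ ∧ KSat M ψ w σ
  | .assign x a φ, w, σ => a ∈ M.δ w → KSat M φ w (Function.update σ x a)
  | .know Xs α, w, σ => ∀ v : M.W, (∀ x ∈ Xs, M.R (σ x) w v) → KSat M α v σ

/-! ## Bisimulations -/

/-- Bisimulation between simplicial models. -/
def IsSBisim (C D : SimpModel Ag Pr) (Z : Set (Set C.V × Set D.V)) : Prop :=
  (∀ q ∈ Z, q.1 ∈ C.facets ∧ q.2 ∈ D.facets) ∧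
    ∀ F G, (F, G) ∈ Z →
      (C.χ '' F = D.χ '' G ∧ ∀ p : Pr, C.χ '' (F ∩ C.ℓ p) = D.χ '' (G ∩ D.ℓ p)) ∧
      (∀ (As : Set Ag) (F' : Set C.V), F' ∈ C.facets → As ⊆ C.χ '' (F ∩ F') →
        ∃ G' ∈ D.facets, As ⊆ D.χ '' (G ∩ G') ∧ (F', G') ∈ Z) ∧
      (∀ (As : Set Ag) (G' : Set D.V), G' ∈ D.facets → As ⊆ D.χ '' (G ∩ G') →
        ∃ F' ∈ C.facets, As ⊆ C.χ '' (F ∩ F') ∧ (F', G') ∈ Z)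

/-- Bisimulation between first-order Kripke models. -/
def IsKBisim (M N : KModel Ag Pr) (Z : Set (M.W × N.W)) : Prop :=
  ∀ w v, (w, v) ∈ Z →
    (M.δ w = N.δ v ∧ ∀ p : Pr, M.ρ p w = N.ρ p v) ∧
    (∀ (As : Set Ag) (w' : M.W), (∀ a ∈ As, M.R a w w') →
      ∃ v' : N.W, (∀ a ∈ As, N.R a v v') ∧ (w', v') ∈ Z) ∧
    (∀ (As : Set Ag) (v' : N.W), (∀ a ∈ As, N.R a v v') →
      ∃ w' : M.W, (∀ a ∈ As, M.R a w w') ∧ (w', v') ∈ Z)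

/-! ## Local epistemic models -/

/-- (Local S5): the restriction of `R_a` to `{w | a ∈ δ(w)}` is an equivalence relation. -/
def LocalS5 (M : KModel Ag Pr) : Prop :=
  ∀ a : Ag, Equivalence (fun w v : {w : M.W // a ∈ M.δ w} => M.R a w.1 v.1)

/-- (Individually Increasing Domain). -/
def IndInc (M : KModel Ag Pr) : Prop :=
  ∀ (a : Ag) (w v : M.W), a ∈ M.δ w → M.R a w v → a ∈ M.δ v

/-- (Local Predicates). -/
def LocalPred (M : KModel Ag Pr) : Prop :=
  ∀ (p : Pr) (a : Ag) (w v : M.W), a ∈ M.ρ p w → M.R a w v → a ∈ M.ρ p v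

/-- (Collectively Decreasing Domain). -/
def CollDec (M : KModel Ag Pr) : Prop :=
  ∀ w v : M.W, (∀ a ∈ M.δ w, M.R a w v) → M.δ v ⊆ M.δ w

/-- A local epistemic model. -/
def IsLEM (M : KModel Ag Pr) : Prop :=
  LocalS5 M ∧ IndInc M ∧ LocalPred M ∧ CollDec M

/-- (Properness): `⋂_{a ∈ δ(w)} R_a(w) = {w}` for every `w`. -/
def Proper (M : KModel Ag Pr) : Prop :=
  ∀ w : M.W, {v : M.W | ∀ a ∈ M.δ w, M.R a w v} = {w}

/-! ## Properization -/

/-- `[w]_δ = ⋂_{a ∈ δ(w)} R_a(w)`. -/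
def cell (M : KModel Ag Pr) (w : M.W) : Set M.W := {v | ∀ a ∈ M.δ w, M.R a w v}

/-- The properization `M^pr` of a Kripke model. -/
noncomputable def properize (M : KModel Ag Pr) : KModel Ag Pr where
  W := {S : Set M.W // ∃ w : M.W, S = cell M w}
  δ := fun S => M.δ S.2.choose
  R := fun a S T => ∃ w v : M.W, S.1 = cell M w ∧ T.1 = cell M v ∧ M.R a w v
  ρ := fun p S => M.ρ p S.2.choose

/-! ## The maps LEM and SC -/

/-- `LEM(C)`: the first-order Kripke model associated to a simplicial model. -/
def LEMof (C : SimpModel Ag Pr) : KModel Ag Pr where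
  W := {F : Set C.V // F ∈ C.facets}
  δ := fun F => C.χ '' F.1
  R := fun a F G => a ∈ C.χ '' (F.1 ∩ G.1)
  ρ := fun p F => C.χ '' (F.1 ∩ C.ℓ p)

/-- Vertices of `SC(M)`: pairs `(a, [w]_a)` with `a ∈ δ(w)`, `[w]_a = R_a(w)`. -/
abbrev SCVert (M : KModel Ag Pr) : Type :=
  {u : Ag × Set M.W // ∃ w : M.W, u.1 ∈ M.δ w ∧ u.2 = {v : M.W | M.R u.1 w v}}

/-- `F^M_w = {(a, [w]_a) | a ∈ δ(w)}`. -/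
def SCface (M : KModel Ag Pr) (w : M.W) : Set (SCVert M) :=
  {u | u.1.1 ∈ M.δ w ∧ u.1.2 = {v : M.W | M.R u.1.1 w v}}

/-- `SC(M)`: the simplicial model associated to a Kripke model. -/
def SCof (M : KModel Ag Pr) : SimpModel Ag Pr where
  V := SCVert M
  faces := {F : Set (SCVert M) | F.Nonempty ∧ ∃ w : M.W, F ⊆ SCface M w}
  χ := fun u => u.1.1
  ℓ := fun p => {u | ∃ w : M.W, u.1.1 ∈ M.ρ p w ∧ u.1.2 = {v : M.W | M.R u.1.1 w v}}

/-! ## Isomorphisms -/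

/-- Isomorphism of first-order Kripke models. -/
structure KIso (M N : KModel Ag Pr) where
  toEquiv : M.W ≃ N.W
  δ_eq : ∀ w : M.W, N.δ (toEquiv w) = M.δ w
  R_iff : ∀ (a : Ag) (w v : M.W), N.R a (toEquiv w) (toEquiv v) ↔ M.R a w v
  ρ_eq : ∀ (p : Pr) (w : M.W), N.ρ p (toEquiv w) = M.ρ p w

/-- Isomorphism of simplicial models. -/
structure SIso (C D : SimpModel Ag Pr) where
  toEquiv : C.V ≃ D.V
  face_iff : ∀ F : Set C.V, F ∈ C.faces ↔ (toEquiv '' F) ∈ D.faces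
  χ_eq : ∀ v : C.V, D.χ (toEquiv v) = C.χ v
  ℓ_iff : ∀ (p : Pr) (v : C.V), toEquiv v ∈ D.ℓ p ↔ v ∈ C.ℓ p

/-! ## The proof system LEL -/

/-- The axiom system `LEL` (over the well-formed fragment of the language). -/
inductive LEL [DecidableEq Xv] : Formula Ag Xv Pr → Prop
  | taut {φ} : Formula.Wf φ → Formula.Tautology φ → LEL φ
  | kk {Xs : Finset Xv} {α β} : Formula.Sent α → Formula.Sent β →
      LEL (Formula.impl (.know Xs (Formula.impl α β))
        (Formula.impl (.know Xs α) (.know Xs β)))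
  | mono {Xs Ys : Finset Xv} {α} : Xs ⊆ Ys → Formula.Sent α →
      LEL (Formula.impl (.know Xs α) (.know Ys α))
  | kasgn {x : Xv} {a : Ag} {φ ψ} : Formula.Wf φ → Formula.Wf ψ →
      LEL (Formula.impl (.assign x a (Formula.impl φ ψ))
        (Formula.impl (.assign x a φ) (.assign x a ψ)))
  | det {x : Xv} {a : Ag} {φ} : Formula.Wf φ →
      LEL (Formula.impl (Formula.dia x a φ) (.assign x a φ))
  | tr {x : Xv} {a : Ag} {φ} : Formula.Wf φ → x ∉ Formula.FV φ →
      LEL (Formula.impl φ (.assign x a φ))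
  | sub {x y : Xv} {a : Ag} {φ} : Formula.Wf φ → Formula.Adm x y φ →
      LEL (.assign y a (Formula.impl (.assign x a φ) (Formula.subst x y φ)))
  | com {x y : Xv} {a b : Ag} {φ} : Formula.Wf φ → x ≠ y →
      LEL (Formula.impl (.assign x a (.assign y b φ)) (.assign y b (.assign x a φ)))
  | ui {x : Xv} {φ} (l : List Ag) : Formula.Wf φ → l.Nodup → (∀ a : Ag, a ∈ l) →
      LEL (Formula.impl (Formula.bigAnd (l.map fun a => .assign x a φ)) φ)
  | tK {Xs : Finset Xv} {α} : Formula.Sent α → LEL (Formula.impl (.know Xs α) α)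
  | kni {xs : List Xv} {as : List Ag} {α} :
      Formula.Sent α → xs.Nodup → xs.length = as.length →
      LEL (Formula.assigns xs as (Formula.impl (.neg (.know xs.toFinset α))
        (.know xs.toFinset (Formula.assigns xs as (.neg (.know xs.toFinset α))))))
  | epi {x : Xv} {a : Ag} : LEL (.assign x a (.know {x} (Formula.dia x a .top)))
  | api {x : Xv} {a : Ag} {p : Pr} :
      LEL (.assign x a (Formula.impl (.atom p x) (.know {x} (.assign x a (.atom p x)))))
  | eni {xs : List Xv} {as : List Ag} {z : Xv} (l : List Ag) :
      xs.Nodup → xs.length = as.length → l.Nodup → (∀ b : Ag, b ∈ l ↔ b ∉ as) →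
      LEL (Formula.assigns xs as
        (Formula.impl (Formula.bigAnd (l.map fun b => .assign z b Formula.fbot))
          (.know xs.toFinset (Formula.bigAnd (l.map fun b => .assign z b Formula.fbot)))))
  | mp {φ ψ} : LEL (Formula.impl φ ψ) → LEL φ → LEL ψ
  | necK {α} : Formula.Sent α → LEL α → LEL (.know ∅ α)
  | necA {x : Xv} {a : Ag} {φ} : LEL φ → LEL (.assign x a φ)

/-- `Γ` is consistent in `LEL`: no finite subset has a provably false conjunction. -/
def Consistent [DecidableEq Xv] (Γ : Set (Formula Ag Xv Pr)) : Prop :=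
  ¬ ∃ l : List (Formula Ag Xv Pr), (∀ φ ∈ l, φ ∈ Γ) ∧ LEL (.neg (Formula.bigAnd l))

end SimplicialEpistemic

namespace SimplicialEpistemic

/-- A saturated simplicial model. -/
def SSaturated (Xv : Type) [DecidableEq Xv] {Ag Pr : Type} (C : SimpModel Ag Pr) : Prop :=
  ∀ (As : Set Ag) (F : Set C.V), F ∈ C.facets →
    ∀ Δ : Set (Formula Ag Xv Pr), (∀ α ∈ Δ, Formula.Sent α) →
      (∀ Δ₀ ⊆ Δ, Δ₀.Finite →
          ∃ G ∈ C.facets, As ⊆ C.χ '' (F ∩ G) ∧ ∀ α ∈ Δ₀, ∀ σ : Xv → Ag, SSat C α G σ) →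
      ∃ G ∈ C.facets, As ⊆ C.χ '' (F ∩ G) ∧ ∀ α ∈ Δ, ∀ σ : Xv → Ag, SSat C α G σ


section HMAux
variable {Ag Xv Pr : Type}

section Aux
variable [DecidableEq Xv]

theorem ssat_congr (C : SimpModel Ag Pr) (φ : Formula Ag Xv Pr) (hwf : φ.Wf) :
    ∀ (F : Set C.V) (σ σ' : Xv → Ag),
      (∀ x ∈ φ.FV, σ x = σ' x) → (SSat C φ F σ ↔ SSat C φ F σ') := by
  induction φ with
  | atom p x =>
    intro F σ σ' h
    simp only [SSat, h x (by simp [Formula.FV])]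
  | top => intro F σ σ' h; simp [SSat]
  | neg φ ih => intro F σ σ' h; simp only [SSat]; rw [ih hwf F σ σ' h]
  | and φ ψ ihφ ihψ =>
    intro F σ σ' h
    simp only [SSat]
    rw [ihφ hwf.1 F σ σ' fun x hx => h x (by simp [Formula.FV, hx]),
      ihψ hwf.2 F σ σ' fun x hx => h x (by simp [Formula.FV, hx])]
  | assign x a φ ih =>
    intro F σ σ' h
    simp only [SSat]
    rw [ih hwf F (Function.update σ x a) (Function.update σ' x a) ?_]
    intro y hy
    rcases eq_or_ne y x with rfl | hne
    · simp
    · simp only [Function.update_of_ne hne]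
      exact h y (by simp [Formula.FV, hy, hne])
  | know Xs α ih =>
    intro F σ σ' h
    simp only [SSat]
    refine forall₂_congr fun G hG => ?_
    rw [ih hwf.1 G σ σ' fun x hx => absurd (hwf.2 ▸ hx) (Finset.notMem_empty x)]
    refine imp_congr ?_ Iff.rfl
    exact forall₂_congr fun x hx => by rw [h x (by simpa [Formula.FV] using hx)]

theorem ssat_bigAnd (C : SimpModel Ag Pr) (l : List (Formula Ag Xv Pr))
    (F : Set C.V) (σ : Xv → Ag) :
    SSat C (Formula.bigAnd l) F σ ↔ ∀ φ ∈ l, SSat C φ F σ := by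
  induction l with
  | nil => simp [Formula.bigAnd, SSat]
  | cons φ l ih => simp [Formula.bigAnd, SSat, ih]

theorem sent_bigAnd (l : List (Formula Ag Xv Pr)) (h : ∀ φ ∈ l, φ.Sent) :
    (Formula.bigAnd l).Sent := by
  induction l with
  | nil => exact ⟨trivial, rfl⟩
  | cons φ l ih =>
    obtain ⟨h1, h2⟩ := h φ (by simp)
    obtain ⟨h3, h4⟩ := ih fun ψ hψ => h ψ (by simp [hψ])
    exact ⟨⟨h1, h3⟩, by simp [Formula.bigAnd, Formula.FV, h2, h4]⟩

def updL (L : List (Xv × Ag)) (σ : Xv → Ag) : Xv → Ag :=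
  L.foldl (fun τ p => Function.update τ p.1 p.2) σ

theorem updL_notmem {L : List (Xv × Ag)} {x : Xv} (h : x ∉ L.map Prod.fst)
    (σ : Xv → Ag) : updL L σ x = σ x := by
  induction L generalizing σ with
  | nil => rfl
  | cons p L ih =>
    simp only [List.map_cons, List.mem_cons, not_or] at h
    rw [updL, List.foldl_cons, ← updL, ih h.2, Function.update_of_ne (Ne.symm (Ne.symm h.1))]

theorem updL_mem {L : List (Xv × Ag)} (hnd : (L.map Prod.fst).Nodup) :
    ∀ p ∈ L, ∀ σ, updL L σ p.1 = p.2 := by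
  induction L with
  | nil => simp
  | cons q L ih =>
    simp only [List.map_cons, List.nodup_cons] at hnd
    intro p hp σ
    rcases List.mem_cons.1 hp with rfl | hp
    · rw [updL, List.foldl_cons, ← updL, updL_notmem hnd.1, Function.update_self]
    · exact ih hnd.2 p hp _

theorem ssat_assignsL (C : SimpModel Ag Pr) (ψ : Formula Ag Xv Pr)
    (L : List (Xv × Ag)) (F : Set C.V) (hF : ∀ p ∈ L, p.2 ∈ C.χ '' F) (σ : Xv → Ag) :
    SSat C (Formula.assigns (L.map Prod.fst) (L.map Prod.snd) ψ) F σ ↔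
      SSat C ψ F (updL L σ) := by
  induction L generalizing σ with
  | nil => rfl
  | cons p L ih =>
    simp only [List.map_cons, Formula.assigns, SSat]
    rw [imp_iff_right (hF p (by simp)), ih (fun q hq => hF q (by simp [hq]))]
    rfl

theorem fv_assignsL (ψ : Formula Ag Xv Pr) (L : List (Xv × Ag)) :
    (Formula.assigns (L.map Prod.fst) (L.map Prod.snd) ψ).FV
      = ψ.FV \ (L.map Prod.fst).toFinset := by
  induction L with
  | nil => simp [Formula.assigns]
  | cons p L ih =>
    simp only [List.map_cons, Formula.assigns, Formula.FV, ih]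
    ext y
    simp only [Finset.mem_sdiff, Finset.mem_singleton, List.toFinset_cons, Finset.mem_insert]
    tauto

theorem wf_assignsL (ψ : Formula Ag Xv Pr) (hψ : ψ.Wf) (L : List (Xv × Ag)) :
    (Formula.assigns (L.map Prod.fst) (L.map Prod.snd) ψ).Wf := by
  induction L with
  | nil => exact hψ
  | cons p L ih => exact ih

theorem exists_pairing [Infinite Xv] (asl : List Ag) :
    ∃ L : List (Xv × Ag), (L.map Prod.fst).Nodup ∧ L.map Prod.snd = asl := by
  induction asl with
  | nil => exact ⟨[], by simp, by simp⟩
  | cons a as ih =>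
    obtain ⟨L, h1, h2⟩ := ih
    obtain ⟨x, hx⟩ := Infinite.exists_notMem_finset (L.map Prod.fst).toFinset
    refine ⟨(x, a) :: L, ?_, by simp [h2]⟩
    simp only [List.map_cons, List.nodup_cons]
    exact ⟨fun h => hx (List.mem_toFinset.2 h), h1⟩

theorem sbisim_invariance {C D : SimpModel Ag Pr} {Z} (hZ : IsSBisim C D Z)
    (φ : Formula Ag Xv Pr) :
    ∀ (F : Set C.V) (G : Set D.V) (σ : Xv → Ag), (F, G) ∈ Z →
      (SSat C φ F σ ↔ SSat D φ G σ) := by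
  induction φ with
  | atom p x =>
    intro F G σ hm
    simp only [SSat, (hZ.2 F G hm).1.2 p]
  | top => intro F G σ hm; simp [SSat]
  | neg φ ih => intro F G σ hm; simp only [SSat]; rw [ih F G σ hm]
  | and φ ψ ihφ ihψ => intro F G σ hm; simp only [SSat]; rw [ihφ F G σ hm, ihψ F G σ hm]
  | assign x a φ ih =>
    intro F G σ hm
    simp only [SSat, (hZ.2 F G hm).1.1]
    exact imp_congr Iff.rfl (ih F G _ hm)
  | know Xs α ih =>
    intro F G σ hm
    simp only [SSat]
    constructor
    · intro h G' hG' hguard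
      obtain ⟨F', hF', hsub, hm'⟩ := (hZ.2 F G hm).2.2 (σ '' ↑Xs) G' hG'
        (by rintro a ⟨x, hx, rfl⟩; exact hguard x hx)
      exact (ih F' G' σ hm').1 (h F' hF' fun x hx => hsub ⟨x, hx, rfl⟩)
    · intro h F' hF' hguard
      obtain ⟨G', hG', hsub, hm'⟩ := (hZ.2 F G hm).2.1 (σ '' ↑Xs) F' hF'
        (by rintro a ⟨x, hx, rfl⟩; exact hguard x hx)
      exact (ih F' G' σ hm').2 (h G' hG' fun x hx => hsub ⟨x, hx, rfl⟩)

end Aux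

section Core
variable (Xv) [DecidableEq Xv]

/-- The logical-equivalence relation between facets. -/
def Zle (C D : SimpModel Ag Pr) : Set (Set C.V × Set D.V) :=
  {q | q.1 ∈ C.facets ∧ q.2 ∈ D.facets ∧
    ∀ α : Formula Ag Xv Pr, α.Sent →
      ((∀ σ : Xv → Ag, SSat C α q.1 σ) ↔ (∀ σ : Xv → Ag, SSat D α q.2 σ))}

variable {Xv}

theorem Zle_inv [Nonempty Ag] [Nonempty Xv] {C D : SimpModel Ag Pr}
    {F : Set C.V} {G : Set D.V} (h : (F, G) ∈ Zle Xv C D) :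
    C.χ '' F = D.χ '' G ∧ ∀ p : Pr, C.χ '' (F ∩ C.ℓ p) = D.χ '' (G ∩ D.ℓ p) := by
  haveI : Nonempty (Xv → Ag) := ⟨fun _ => Classical.arbitrary Ag⟩
  obtain x := Classical.arbitrary Xv
  constructor
  · ext a
    have hS : (Formula.neg (Formula.assign x a (Formula.neg Formula.top))
        : Formula Ag Xv Pr).Sent := ⟨trivial, by simp [Formula.FV]⟩
    have := h.2.2 _ hS
    simpa [SSat] using this
  · intro p
    ext a
    have hS : (Formula.neg (Formula.assign x a (Formula.neg (Formula.atom p x)))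
        : Formula Ag Xv Pr).Sent := ⟨trivial, by simp [Formula.FV]⟩
    have h2 := h.2.2 _ hS
    have hC : ∀ F' : Set C.V, a ∈ C.χ '' (F' ∩ C.ℓ p) → a ∈ C.χ '' F' :=
      fun F' hm => (Set.image_mono Set.inter_subset_left) hm
    have hD : ∀ G' : Set D.V, a ∈ D.χ '' (G' ∩ D.ℓ p) → a ∈ D.χ '' G' :=
      fun G' hm => (Set.image_mono Set.inter_subset_left) hm
    simp only [SSat, _root_.not_imp, not_not, Function.update_self, forall_const] at h2
    constructor
    · intro ha; exact (h2.1 ⟨hC F ha, ha⟩).2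
    · intro ha; exact (h2.2 ⟨hD G ha, ha⟩).2

theorem Zle_zig [Fintype Ag] [Nonempty Ag] [DecidableEq Ag] [Infinite Xv]
    {C D : SimpModel Ag Pr} (hDsat : SSaturated Xv D)
    {F : Set C.V} {G : Set D.V} (h : (F, G) ∈ Zle Xv C D) :
    ∀ (As : Set Ag) (F' : Set C.V), F' ∈ C.facets → As ⊆ C.χ '' (F ∩ F') →
      ∃ G' ∈ D.facets, As ⊆ D.χ '' (G ∩ G') ∧ (F', G') ∈ Zle Xv C D := by
  classical
  haveI : Nonempty (Xv → Ag) := ⟨fun _ => Classical.arbitrary Ag⟩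
  intro As F' hF' hAs
  -- enumerate As by a nodup list
  have hAsfin : As.Finite := Set.toFinite As
  set asl : List Ag := hAsfin.toFinset.toList with hasl
  have haslmem : ∀ a, a ∈ asl ↔ a ∈ As := by
    intro a; rw [hasl, Finset.mem_toList, Set.Finite.mem_toFinset]
  obtain ⟨L, hLnd, hLsnd⟩ := exists_pairing (Xv := Xv) asl
  have hsnd_mem : ∀ p ∈ L, p.2 ∈ As := by
    intro p hp
    exact (haslmem p.2).1 (hLsnd ▸ List.mem_map_of_mem (f := Prod.snd) hp)
  have hmem_snd : ∀ a ∈ As, ∃ p ∈ L, p.2 = a := by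
    intro a ha
    have : a ∈ L.map Prod.snd := hLsnd ▸ (haslmem a).2 ha
    simpa using this
  have hAsF : As ⊆ C.χ '' F :=
    fun a ha => (Set.image_mono Set.inter_subset_left) (hAs ha)
  have hAsG : As ⊆ D.χ '' G := (Zle_inv h).1 ▸ hAsF
  set Xs : Finset Xv := (L.map Prod.fst).toFinset with hXs
  -- the theory of F'
  set Δ : Set (Formula Ag Xv Pr) :=
    {α | α.Sent ∧ ∀ σ : Xv → Ag, SSat C α F' σ} with hΔ
  have hsent : ∀ α ∈ Δ, α.Sent := fun α hα => hα.1
  have hfin : ∀ Δ₀ ⊆ Δ, Δ₀.Finite →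
      ∃ H ∈ D.facets, As ⊆ D.χ '' (G ∩ H) ∧ ∀ α ∈ Δ₀, ∀ σ : Xv → Ag, SSat D α H σ := by
    intro Δ₀ hsub0 hfin0
    set l₀ : List (Formula Ag Xv Pr) := hfin0.toFinset.toList with hl0
    have hl0mem : ∀ γ, γ ∈ l₀ ↔ γ ∈ Δ₀ := by
      intro γ; rw [hl0, Finset.mem_toList, Set.Finite.mem_toFinset]
    set β := Formula.bigAnd l₀ with hβ
    have hβS : β.Sent := sent_bigAnd l₀ fun γ hγ => (hsub0 ((hl0mem γ).1 hγ)).1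
    set φ : Formula Ag Xv Pr := Formula.assigns (L.map Prod.fst) (L.map Prod.snd)
      (Formula.neg (Formula.know Xs (Formula.neg β))) with hφ
    have hφS : φ.Sent := by
      constructor
      · rw [hφ]
        exact wf_assignsL (Formula.neg (Formula.know Xs (Formula.neg β))) ⟨hβS.1, hβS.2⟩ L
      · rw [hφ, fv_assignsL]
        simp [Formula.FV, hXs]
    have hCφ : ∀ σ : Xv → Ag, SSat C φ F σ := by
      intro σ
      rw [hφ, ssat_assignsL C _ L F fun p hp => hAsF (hsnd_mem p hp)]
      simp only [SSat]
      intro hcon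
      refine hcon F' hF' ?_ ?_
      · intro x hx
        obtain ⟨p, hp, rfl⟩ : ∃ p ∈ L, p.1 = x := by
          simpa using List.mem_toFinset.1 hx
        rw [updL_mem hLnd p hp]
        exact hAs (hsnd_mem p hp)
      · rw [hβ, ssat_bigAnd]
        intro γ hγ
        exact (hsub0 ((hl0mem γ).1 hγ)).2 _
    have hDφ : SSat D φ G (fun _ => Classical.arbitrary Ag) :=
      (h.2.2 φ hφS).1 hCφ (fun _ => Classical.arbitrary Ag)
    rw [hφ, ssat_assignsL D _ L G fun p hp => hAsG (hsnd_mem p hp)] at hDφ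
    simp only [SSat] at hDφ
    push_neg at hDφ
    obtain ⟨H, hH, hguard, hβH⟩ := hDφ
    refine ⟨H, hH, ?_, ?_⟩
    · intro a ha
      obtain ⟨p, hp, rfl⟩ := hmem_snd a ha
      have := hguard p.1 (List.mem_toFinset.2 (List.mem_map_of_mem (f := Prod.fst) hp))
      rwa [updL_mem hLnd p hp] at this
    · intro α hα σ
      have h1 : SSat D α H (updL L fun _ => Classical.arbitrary Ag) :=
        (ssat_bigAnd D l₀ H _).1 hβH α ((hl0mem α).2 hα)
      exact (ssat_congr D α (hsub0 hα).1.1 H _ σ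
        fun x hx => absurd ((hsub0 hα).1.2 ▸ hx) (Finset.notMem_empty x)).1 h1
  obtain ⟨G', hG', hsubG, hall⟩ := hDsat As G h.2.1 Δ hsent hfin
  refine ⟨G', hG', hsubG, hF', hG', ?_⟩
  intro α hα
  constructor
  · intro hCα σ
    exact hall α ⟨hα, hCα⟩ σ
  · intro hDα
    by_contra hCα
    push_neg at hCα
    obtain ⟨σ₀, hσ₀⟩ := hCα
    have hnegΔ : Formula.neg α ∈ Δ := by
      refine ⟨⟨hα.1, hα.2⟩, fun σ => ?_⟩
      intro hcon
      exact hσ₀ ((ssat_congr C α hα.1 F' σ σ₀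
        fun x hx => absurd (hα.2 ▸ hx) (Finset.notMem_empty x)).1 hcon)
    exact hall _ hnegΔ (fun _ => Classical.arbitrary Ag)
      (hDα (fun _ => Classical.arbitrary Ag))

end Core

end HMAux

/-- Hennessy-Milner property for saturated simplicial models. -/
theorem hennessy_milner_simplicial
    {Ag Xv Pr : Type} [Fintype Ag] [Nonempty Ag] [DecidableEq Ag]
    [DecidableEq Xv] [Countable Xv] [Infinite Xv] [Countable Pr]
    (C D : SimpModel Ag Pr) (hC : C.IsModel) (hD : D.IsModel)
    (hCsat : SSaturated Xv C) (hDsat : SSaturated Xv D)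
    (F : Set C.V) (G : Set D.V) (hF : F ∈ C.facets) (hG : G ∈ D.facets) :
    (∃ Z, IsSBisim C D Z ∧ (F, G) ∈ Z) ↔
      (∀ α : Formula Ag Xv Pr, Formula.Sent α →
        ((∀ σ : Xv → Ag, SSat C α F σ) ↔ (∀ σ : Xv → Ag, SSat D α G σ))) := by
  constructor
  · rintro ⟨Z, hZ, hFG⟩ α hα
    exact forall_congr' fun σ => sbisim_invariance hZ α F G σ hFG
  · intro heq
    refine ⟨Zle Xv C D, ⟨?_, ?_⟩, hF, hG, heq⟩
    · rintro ⟨F', G'⟩ ⟨h1, h2, _⟩; exact ⟨h1, h2⟩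
    · intro F' G' hm
      refine ⟨Zle_inv hm, Zle_zig hDsat hm, ?_⟩
      intro As G'' hG'' hsub
      have hm' : (G', F') ∈ Zle Xv D C := ⟨hm.2.1, hm.1, fun α hα => (hm.2.2 α hα).symm⟩
      obtain ⟨F'', hF'', hsub', hm''⟩ := Zle_zig hCsat hm' As G'' hG'' hsub
      exact ⟨F'', hF'', hsub', hm''.2.1, hm''.1, fun α hα => (hm''.2.2 α hα).symm⟩

end SimplicialEpistemic
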